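/- If D is an α^k-derivation and D' an α^{k'}-derivation of an n-ary multiplicative Hom-Nambu-Lie superalgebra (g,[·,...,·],α), both homogeneous, then the supercommutator [D,D'] = D∘D' − (−1)^{|D||D'|} D'∘D is an α^{k+k'}-derivation of g. -/

import Mathlib

open Finset

/-- An `(m+1)`-ary multiplicative Hom-Nambu-Lie superalgebra structure on a `K`-vector space
`V` with `ℤ/2`-grading `gr`, `(m+1)`-linear bracket `br` and twist map `α`. -/
structure IsHNLS (K : Type*) {V : Type*} [Field K] [AddCommGroup V] [Module K V]
    (m : ℕ) (gr : ZMod 2 → Submodule K V)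
    (br : MultilinearMap K (fun _ : Fin (m + 1) => V) V)
    (α : V →ₗ[K] V) : Prop where
  even_alpha : ∀ (d : ZMod 2), ∀ v ∈ gr d, α v ∈ gr d
  even_br : ∀ (d : Fin (m + 1) → ZMod 2) (x : Fin (m + 1) → V),
      (∀ i, x i ∈ gr (d i)) → br x ∈ gr (∑ i, d i)
  skew : ∀ (d : Fin (m + 1) → ZMod 2) (x : Fin (m + 1) → V),
      (∀ i, x i ∈ gr (d i)) → ∀ i j : Fin (m + 1), (i : ℕ) + 1 = (j : ℕ) →
      br x = -((-1 : K) ^ (d i * d j).val) • br (x ∘ Equiv.swap i j)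
  mult : ∀ x : Fin (m + 1) → V, α (br x) = br fun i => α (x i)
  jacobi : ∀ (dx : Fin m → ZMod 2) (dy : Fin (m + 1) → ZMod 2)
      (x : Fin m → V) (y : Fin (m + 1) → V),
      (∀ i, x i ∈ gr (dx i)) → (∀ i, y i ∈ gr (dy i)) →
      br (Fin.snoc (fun i => α (x i)) (br y)) =
        ∑ i : Fin (m + 1),
          ((-1 : K) ^ (((∑ j, dx j) * ∑ j ∈ univ.filter (fun j => j < i), dy j).val)) •
            br (Function.update (fun j => α (y j)) i (br (Fin.snoc x (y i))))

/-- `D` is an `α^k`-derivation of homogeneous degree `dD` of the `(m+1)`-ary multiplicative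
Hom-Nambu-Lie superalgebra `(V, gr, br, α)`. -/
def IsAlphaDer {K V : Type*} [Field K] [AddCommGroup V] [Module K V] (m : ℕ)
    (gr : ZMod 2 → Submodule K V)
    (br : MultilinearMap K (fun _ : Fin (m + 1) => V) V)
    (α : V →ₗ[K] V) (k : ℕ) (dD : ZMod 2) (D : V → V) : Prop :=
  IsLinearMap K D ∧ (∀ v, D (α v) = α (D v)) ∧
    (∀ (d : ZMod 2), ∀ v ∈ gr d, D v ∈ gr (dD + d)) ∧
    ∀ (d : Fin (m + 1) → ZMod 2) (x : Fin (m + 1) → V), (∀ i, x i ∈ gr (d i)) →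
      D (br x) = ∑ i : Fin (m + 1),
        ((-1 : K) ^ ((dD * ∑ j ∈ univ.filter (fun j => j < i), d j).val)) •
          br (Function.update (fun j => (α ^ k) (x j)) i (D (x i)))

private lemma zmod2_em (a : ZMod 2) : a = 0 ∨ a = 1 := by revert a; decide

private lemma eps_add {K : Type*} [Field K] (a b : ZMod 2) :
    ((-1:K) ^ (a + b).val) = (-1:K) ^ a.val * (-1:K) ^ b.val := by
  rcases zmod2_em a with rfl | rfl <;> rcases zmod2_em b with rfl | rfl <;>
    simp only [show ((1:ZMod 2)+1)=0 from by decide, add_zero, zero_add,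
      show (0:ZMod 2).val = 0 from rfl, show (1:ZMod 2).val = 1 from rfl] <;> ring

private lemma eps_sq {K : Type*} [Field K] (a : ZMod 2) :
    ((-1:K) ^ a.val) * ((-1:K) ^ a.val) = 1 := by
  rcases zmod2_em a with rfl | rfl <;>
    simp only [show (0:ZMod 2).val = 0 from rfl, show (1:ZMod 2).val = 1 from rfl] <;> ring

/-- Lemma 2.3: the supercommutator of an `α^k`-derivation and an `α^{k'}`-derivation is an
`α^{k+k'}`-derivation. -/
theorem supercommutator_der {K V : Type*} [Field K] [AddCommGroup V] [Module K V] (m : ℕ)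
    (gr : ZMod 2 → Submodule K V)
    (br : MultilinearMap K (fun _ : Fin (m + 1) => V) V)
    (α : V →ₗ[K] V) (h : IsHNLS K m gr br α)
    (k k' : ℕ) (dD dD' : ZMod 2) (D D' : V → V)
    (hD : IsAlphaDer m gr br α k dD D) (hD' : IsAlphaDer m gr br α k' dD' D') :
    IsAlphaDer m gr br α (k + k') (dD + dD')
      (fun v => D (D' v) - ((-1 : K) ^ ((dD * dD').val)) • D' (D v)) := by
  obtain ⟨hD1, hD2, hD3, hD4⟩ := hD
  obtain ⟨hD'1, hD'2, hD'3, hD'4⟩ := hD'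
  have hαpow : ∀ (n : ℕ) (e : ZMod 2) (v : V), v ∈ gr e → (α ^ n) v ∈ gr e := by
    intro n
    induction n with
    | zero => intro e v hv; simpa using hv
    | succ n ih =>
        intro e v hv
        rw [pow_succ, Module.End.mul_apply]
        exact ih _ _ (h.even_alpha _ _ hv)
  have hDpow : ∀ (n : ℕ) (v : V), D ((α ^ n) v) = (α ^ n) (D v) := by
    intro n
    induction n with
    | zero => intro v; simp
    | succ n ih =>
        intro v
        rw [pow_succ]
        simp only [Module.End.mul_apply]
        rw [ih, hD2]
  have hD'pow : ∀ (n : ℕ) (v : V), D' ((α ^ n) v) = (α ^ n) (D' v) := by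
    intro n
    induction n with
    | zero => intro v; simp
    | succ n ih =>
        intro v
        rw [pow_succ]
        simp only [Module.End.mul_apply]
        rw [ih, hD'2]
  have hkk' : ∀ v : V, (α ^ k) ((α ^ k') v) = (α ^ (k + k')) v := by
    intro v; rw [pow_add]; rfl
  have hk'k : ∀ v : V, (α ^ k') ((α ^ k) v) = (α ^ (k + k')) v := by
    intro v; rw [add_comm k k', pow_add]; rfl
  have hDs : ∀ (f : Fin (m+1) → V), D (∑ i, f i) = ∑ i, D (f i) :=
    fun f => map_sum (IsLinearMap.mk' D hD1) f univ
  have hD's : ∀ (f : Fin (m+1) → V), D' (∑ i, f i) = ∑ i, D' (f i) :=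
    fun f => map_sum (IsLinearMap.mk' D' hD'1) f univ
  refine ⟨⟨?_, ?_⟩, ?_, ?_, ?_⟩
  · intro u v
    simp only [hD1.map_add, hD'1.map_add, smul_add]
    abel
  · intro a v
    simp only [hD1.map_smul, hD'1.map_smul, smul_sub, smul_comm a]
  · intro v
    simp only [hD2, hD'2, map_sub, map_smul]
  · intro d v hv
    refine Submodule.sub_mem _ ?_ (Submodule.smul_mem _ _ ?_)
    · have := hD3 _ _ (hD'3 d v hv)
      rwa [← add_assoc] at this
    · have := hD'3 _ _ (hD3 d v hv)
      rwa [show dD' + (dD + d) = dD + dD' + d from by ring] at this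
  · intro d x hx
    beta_reduce
    set S : Fin (m+1) → ZMod 2 := fun l => ∑ j ∈ univ.filter (fun j => j < l), d j with hS
    -- sum of updated degree function over an initial segment
    have hsum_upd : ∀ (i l : Fin (m+1)) (a : ZMod 2),
        (∑ j ∈ univ.filter (fun j => j < l), Function.update d i a j)
          = (if i < l then a - d i else 0) + S l := by
      intro i l a
      by_cases hil : i < l
      · have hmem : i ∈ univ.filter (fun j => j < l) := by simp [hil]
        have hSl : S l = d i + ∑ j ∈ (univ.filter (fun j => j < l)).erase i, d j :=
          (Finset.add_sum_erase _ d hmem).symm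
        rw [Finset.sum_update_of_mem hmem, Finset.sdiff_singleton_eq_erase, if_pos hil, hSl]
        ring
      · have hmem : i ∉ univ.filter (fun j => j < l) := by simp [hil]
        rw [Finset.sum_update_of_notMem hmem, if_neg hil, zero_add]
    -- the two inner arguments
    have hmem' : ∀ i : Fin (m+1), ∀ j,
        Function.update (fun j' => (α ^ k') (x j')) i (D' (x i)) j ∈
          gr (Function.update d i (dD' + d i) j) := by
      intro i j
      rcases eq_or_ne j i with rfl | hji
      · simp only [Function.update_self]
        exact hD'3 _ _ (hx j)
      · simp only [Function.update_of_ne hji]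
        exact hαpow k' _ _ (hx j)
    have hmem : ∀ l : Fin (m+1), ∀ j,
        Function.update (fun j' => (α ^ k) (x j')) l (D (x l)) j ∈
          gr (Function.update d l (dD + d l) j) := by
      intro l j
      rcases eq_or_ne j l with rfl | hjl
      · simp only [Function.update_self]
        exact hD3 _ _ (hx j)
      · simp only [Function.update_of_ne hjl]
        exact hαpow k _ _ (hx j)
    -- expansion of D ∘ D'
    have hDD' : D (D' (br x)) = ∑ i, ∑ l,
        (((-1:K) ^ ((dD' * S i).val)) *
          ((-1:K) ^ ((dD * ∑ j ∈ univ.filter (fun j => j < l),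
              Function.update d i (dD' + d i) j).val))) •
          br (Function.update
                (fun j => (α ^ k) (Function.update (fun j' => (α ^ k') (x j')) i (D' (x i)) j))
                l (D (Function.update (fun j' => (α ^ k') (x j')) i (D' (x i)) l))) := by
      rw [hD'4 d x hx, hDs]
      refine Finset.sum_congr rfl fun i _ => ?_
      rw [hD1.map_smul, hD4 _ _ (hmem' i), Finset.smul_sum]
      refine Finset.sum_congr rfl fun l _ => ?_
      rw [smul_smul]
    -- expansion of D' ∘ D, with summation order swapped
    have hD'D : D' (D (br x)) = ∑ i, ∑ l,
        (((-1:K) ^ ((dD * S l).val)) *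
          ((-1:K) ^ ((dD' * ∑ j ∈ univ.filter (fun j => j < i),
              Function.update d l (dD + d l) j).val))) •
          br (Function.update
                (fun j => (α ^ k') (Function.update (fun j' => (α ^ k) (x j')) l (D (x l)) j))
                i (D' (Function.update (fun j' => (α ^ k) (x j')) l (D (x l)) i))) := by
      rw [Finset.sum_comm]
      rw [hD4 d x hx, hD's]
      refine Finset.sum_congr rfl fun l _ => ?_
      rw [hD'1.map_smul, hD'4 _ _ (hmem l), Finset.smul_sum]
      refine Finset.sum_congr rfl fun i _ => ?_
      rw [smul_smul]
    rw [hDD', hD'D, Finset.smul_sum]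
    simp only [Finset.smul_sum]
    rw [← Finset.sum_sub_distrib]
    refine Finset.sum_congr rfl fun i _ => ?_
    rw [← Finset.sum_sub_distrib]
    have key : ∀ l : Fin (m+1),
        (((-1:K) ^ ((dD' * S i).val)) *
          ((-1:K) ^ ((dD * ∑ j ∈ univ.filter (fun j => j < l),
              Function.update d i (dD' + d i) j).val))) •
          br (Function.update
                (fun j => (α ^ k) (Function.update (fun j' => (α ^ k') (x j')) i (D' (x i)) j))
                l (D (Function.update (fun j' => (α ^ k') (x j')) i (D' (x i)) l))) -
        ((-1:K) ^ ((dD * dD').val)) •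
        (((-1:K) ^ ((dD * S l).val)) *
          ((-1:K) ^ ((dD' * ∑ j ∈ univ.filter (fun j => j < i),
              Function.update d l (dD + d l) j).val))) •
          br (Function.update
                (fun j => (α ^ k') (Function.update (fun j' => (α ^ k) (x j')) l (D (x l)) j))
                i (D' (Function.update (fun j' => (α ^ k) (x j')) l (D (x l)) i))) =
        if i = l then
          ((-1:K) ^ (((dD + dD') * S l).val)) •
            br (Function.update (fun j => (α ^ (k + k')) (x j)) l
              (D (D' (x l)) - ((-1:K) ^ ((dD * dD').val)) • D' (D (x l)))) else 0 := by
      intro l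
      rcases eq_or_ne i l with rfl | hne
      · -- diagonal terms
        rw [if_pos rfl, hsum_upd, hsum_upd, if_neg (lt_irrefl i), if_neg (lt_irrefl i),
          zero_add]
        simp only [Function.update_self]
        have hb1 : ∀ v : V,
            Function.update
              (fun j => (α ^ k) (Function.update (fun j' => (α ^ k') (x j')) i (D' (x i)) j))
              i v = Function.update (fun j => (α ^ (k + k')) (x j)) i v := by
          intro v; funext j
          rcases eq_or_ne j i with rfl | hji
          · simp
          · simp only [Function.update_of_ne hji]
            exact hkk' (x j)
        have hb2 : ∀ v : V,
            Function.update
              (fun j => (α ^ k') (Function.update (fun j' => (α ^ k) (x j')) i (D (x i)) j))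
              i v = Function.update (fun j => (α ^ (k + k')) (x j)) i v := by
          intro v; funext j
          rcases eq_or_ne j i with rfl | hji
          · simp
          · simp only [Function.update_of_ne hji]
            exact hk'k (x j)
        rw [hb1, hb2, show (dD + dD') * S i = dD' * S i + dD * S i from by ring, eps_add,
          MultilinearMap.map_update_sub, MultilinearMap.map_update_smul]
        module
      · -- off-diagonal terms cancel
        rw [if_neg hne, sub_eq_zero, hsum_upd, hsum_upd, add_sub_cancel_right,
          add_sub_cancel_right]
        simp only [Function.update_of_ne hne.symm, Function.update_of_ne hne]
        rw [hDpow k', hD'pow k]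
        have hba : (fun j => (α ^ k)
              (Function.update (fun j' => (α ^ k') (x j')) i (D' (x i)) j)) =
            Function.update (fun j => (α ^ (k + k')) (x j)) i ((α ^ k) (D' (x i))) := by
          funext j
          rcases eq_or_ne j i with rfl | hji
          · simp
          · simp only [Function.update_of_ne hji]
            exact hkk' (x j)
        have hbb : (fun j => (α ^ k')
              (Function.update (fun j' => (α ^ k) (x j')) l (D (x l)) j)) =
            Function.update (fun j => (α ^ (k + k')) (x j)) l ((α ^ k') (D (x l))) := by
          funext j
          rcases eq_or_ne j l with rfl | hjl
          · simp
          · simp only [Function.update_of_ne hjl]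
            exact hk'k (x j)
        rw [hba, hbb, Function.update_comm hne]
        rcases hne.lt_or_gt with hil | hli
        · rw [if_pos hil, if_neg (asymm hil), zero_add, mul_add, eps_add]
          module
        · rw [if_neg (asymm hli), if_pos hli, zero_add,
            show dD' * (dD + S i) = dD * dD' + dD' * S i from by ring, eps_add,
            smul_smul]
          congr 1
          linear_combination (-(((-1:K) ^ ((dD * S l).val)) * ((-1:K) ^ ((dD' * S i).val)))) *
            eps_sq (K := K) (dD * dD')
    rw [Finset.sum_congr rfl fun l _ => key l, Finset.sum_ite_eq]
    simp [hS]
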